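/- Let m > 0, γ̄ > 0, α > 0, and let f_γ(γ) = (m/γ̄)^m γ^{m-1} e^{-mγ/γ̄} / Γ(m) be the Nakagami-m (Gamma) SNR density. Then ∫₀^∞ Q(√(2αγ)) f_γ(γ) dγ = (1/2) I_{m/(m+αγ̄)}(m, 1/2), where I_x(a,b) is the regularized incomplete beta function and Q is the Gaussian Q-function. -/

import Mathlib

open MeasureTheory Real Set

noncomputable def gaussQ (z : ℝ) : ℝ :=
  (Real.sqrt (2 * Real.pi))⁻¹ * ∫ t in Set.Ioi z, Real.exp (-t ^ 2 / 2)

noncomputable def incBeta (x a b : ℝ) : ℝ :=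
  ∫ t in (0:ℝ)..x, t ^ (a - 1) * (1 - t) ^ (b - 1)

noncomputable def regIncBeta (x a b : ℝ) : ℝ := incBeta x a b / incBeta 1 a b

noncomputable def nakagamiPdf (m γbar γ : ℝ) : ℝ :=
  (m / γbar) ^ m * γ ^ (m - 1) * Real.exp (-m * γ / γbar) / Real.Gamma m

lemma integrable_gk : Integrable (fun t : ℝ => Real.exp (-t ^ 2 / 2)) := by
  have h := integrable_exp_neg_mul_sq (by norm_num : (0:ℝ) < 1/2)
  convert h using 2 with t
  ring_nf

lemma gaussQ_eq (z : ℝ) :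
    gaussQ z = (Real.sqrt (2 * Real.pi))⁻¹ *
      ((∫ t in Set.Ioi (0:ℝ), Real.exp (-t ^ 2 / 2)) - ∫ t in (0:ℝ)..z, Real.exp (-t ^ 2 / 2)) := by
  unfold gaussQ
  congr 1
  rcases le_or_gt 0 z with hz | hz
  · rw [intervalIntegral.integral_of_le hz, ← Ioc_union_Ioi_eq_Ioi hz,
      setIntegral_union (Set.Ioc_disjoint_Ioi le_rfl) measurableSet_Ioi
        integrable_gk.integrableOn integrable_gk.integrableOn]
    ring
  · rw [intervalIntegral.integral_of_ge hz.le, ← Ioc_union_Ioi_eq_Ioi hz.le,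
      setIntegral_union (Set.Ioc_disjoint_Ioi le_rfl) measurableSet_Ioi
        integrable_gk.integrableOn integrable_gk.integrableOn]
    ring

lemma continuous_gaussQ : Continuous gaussQ := by
  have : gaussQ = fun z => (Real.sqrt (2 * Real.pi))⁻¹ *
      ((∫ t in Set.Ioi (0:ℝ), Real.exp (-t ^ 2 / 2)) - ∫ t in (0:ℝ)..z, Real.exp (-t ^ 2 / 2)) :=
    funext gaussQ_eq
  rw [this]
  exact continuous_const.mul (continuous_const.sub (integrable_gk.continuous_primitive 0))

lemma gaussQ_nonneg (z : ℝ) : 0 ≤ gaussQ z := by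
  unfold gaussQ
  apply mul_nonneg (by positivity)
  exact setIntegral_nonneg measurableSet_Ioi (fun t _ => (Real.exp_pos _).le)

lemma gaussQ_le_one (z : ℝ) : gaussQ z ≤ 1 := by
  unfold gaussQ
  have h1 : (∫ t in Set.Ioi z, Real.exp (-t ^ 2 / 2)) ≤ ∫ t : ℝ, Real.exp (-t ^ 2 / 2) :=
    setIntegral_le_integral integrable_gk
      (Filter.Eventually.of_forall fun t => (Real.exp_pos _).le)
  have h2 : (∫ t : ℝ, Real.exp (-t ^ 2 / 2)) = Real.sqrt (2 * Real.pi) := by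
    have := integral_gaussian (1/2 : ℝ)
    rw [show Real.pi / (1/2 : ℝ) = 2 * Real.pi by ring] at this
    rw [← this]
    congr 1 with t
    ring_nf
  calc (Real.sqrt (2 * Real.pi))⁻¹ * ∫ t in Set.Ioi z, Real.exp (-t ^ 2 / 2)
      ≤ (Real.sqrt (2 * Real.pi))⁻¹ * Real.sqrt (2 * Real.pi) := by
        apply mul_le_mul_of_nonneg_left _ (by positivity)
        rw [← h2]; exact h1
    _ = 1 := by
        rw [inv_mul_cancel₀]
        positivity

lemma gaussQ_tendsto : Filter.Tendsto gaussQ Filter.atTop (nhds 0) := by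
  have h : Filter.Tendsto (fun z : ℝ => ∫ t in (0:ℝ)..z, Real.exp (-t ^ 2 / 2)) Filter.atTop
      (nhds (∫ t in Set.Ioi (0:ℝ), Real.exp (-t ^ 2 / 2))) :=
    intervalIntegral_tendsto_integral_Ioi 0 integrable_gk.integrableOn Filter.tendsto_id
  have : Filter.Tendsto gaussQ Filter.atTop (nhds ((Real.sqrt (2 * Real.pi))⁻¹ *
      ((∫ t in Set.Ioi (0:ℝ), Real.exp (-t ^ 2 / 2)) - (∫ t in Set.Ioi (0:ℝ), Real.exp (-t ^ 2 / 2))))) := by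
    have : gaussQ = fun z => (Real.sqrt (2 * Real.pi))⁻¹ *
        ((∫ t in Set.Ioi (0:ℝ), Real.exp (-t ^ 2 / 2)) - ∫ t in (0:ℝ)..z, Real.exp (-t ^ 2 / 2)) :=
      funext gaussQ_eq
    rw [this]
    exact (tendsto_const_nhds.sub h).const_mul _
  simpa using this

lemma hasDerivAt_gaussQ (z : ℝ) :
    HasDerivAt gaussQ (-((Real.sqrt (2 * Real.pi))⁻¹ * Real.exp (-z ^ 2 / 2))) z := by
  have hg : gaussQ = fun z => (Real.sqrt (2 * Real.pi))⁻¹ *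
      ((∫ t in Set.Ioi (0:ℝ), Real.exp (-t ^ 2 / 2)) - ∫ t in (0:ℝ)..z, Real.exp (-t ^ 2 / 2)) :=
    funext gaussQ_eq
  rw [hg]
  have hcont : Continuous fun t : ℝ => Real.exp (-t ^ 2 / 2) := by continuity
  have ftc : HasDerivAt (fun u => ∫ t in (0:ℝ)..u, Real.exp (-t ^ 2 / 2))
      (Real.exp (-z ^ 2 / 2)) z :=
    intervalIntegral.integral_hasDerivAt_right integrable_gk.intervalIntegrable
      hcont.stronglyMeasurable.stronglyMeasurableAtFilter hcont.continuousAt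
  have h2 := ((hasDerivAt_const z (∫ t in Set.Ioi (0:ℝ), Real.exp (-t ^ 2 / 2))).sub ftc).const_mul
    (Real.sqrt (2 * Real.pi))⁻¹
  refine h2.congr_deriv ?_
  ring

lemma integrableOn_gpow {s b : ℝ} (hs : 0 < s) (hb : 0 < b) :
    IntegrableOn (fun t : ℝ => t ^ (s - 1) * Real.exp (-(b * t))) (Set.Ioi 0) := by
  have h := integrableOn_rpow_mul_exp_neg_mul_rpow (p := 1) (s := s - 1) (b := b)
    (by linarith) one_pos hb
  simpa [Real.rpow_one, neg_mul] using h

lemma nakagamiPdf_eq (m γbar γ : ℝ) : nakagamiPdf m γbar γ =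
    ((m / γbar) ^ m / Real.Gamma m) * (γ ^ (m - 1) * Real.exp (-(m / γbar * γ))) := by
  unfold nakagamiPdf
  rw [show -m * γ / γbar = -(m / γbar * γ) by ring]
  ring

lemma continuousOn_pdf (m γbar : ℝ) : ContinuousOn (nakagamiPdf m γbar) (Set.Ioi 0) := by
  unfold nakagamiPdf
  intro x hx
  apply ContinuousAt.continuousWithinAt
  have h1 : ContinuousAt (fun γ : ℝ => γ ^ (m - 1)) x :=
    Real.continuousAt_rpow_const x _ (Or.inl (ne_of_gt hx))
  have h2 : ContinuousAt (fun γ : ℝ => Real.exp (-m * γ / γbar)) x := by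
    apply Continuous.continuousAt
    exact (((continuous_const.mul continuous_id).div_const _).rexp)
  exact ((continuousAt_const.mul h1).mul h2).div_const _

lemma integrableOn_pdf {m γbar : ℝ} (hm : 0 < m) (hγ : 0 < γbar) :
    IntegrableOn (nakagamiPdf m γbar) (Set.Ioi 0) := by
  have : nakagamiPdf m γbar = fun γ =>
      ((m / γbar) ^ m / Real.Gamma m) * (γ ^ (m - 1) * Real.exp (-(m / γbar * γ))) :=
    funext (nakagamiPdf_eq m γbar)
  rw [this]
  exact (integrableOn_gpow hm (by positivity)).const_mul _

lemma pdf_nonneg {m γbar : ℝ} (hm : 0 < m) (hγ : 0 < γbar) (γ : ℝ) (hγ' : 0 ≤ γ) :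
    0 ≤ nakagamiPdf m γbar γ := by
  rw [nakagamiPdf_eq]
  have h1 := Real.Gamma_pos_of_pos hm
  have h2 : (0:ℝ) ≤ m / γbar := by positivity
  exact mul_nonneg (by positivity) (mul_nonneg (Real.rpow_nonneg hγ' _) (Real.exp_pos _).le)

lemma hasDerivAt_Q_comp {γ : ℝ} (hγ' : 0 < γ) {a : ℝ} (ha : 0 < a) :
    HasDerivAt (fun a => gaussQ (Real.sqrt (2 * a * γ)))
      (-((Real.sqrt (2 * Real.pi))⁻¹ * Real.exp (-(a * γ))) * (γ / Real.sqrt (2 * a * γ))) a := by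
  have h1 : HasDerivAt (fun a : ℝ => 2 * a * γ) (2 * γ) a := by
    simpa using ((hasDerivAt_id a).const_mul 2).mul_const γ
  have h2 : HasDerivAt Real.sqrt (1 / (2 * Real.sqrt (2 * a * γ))) (2 * a * γ) :=
    Real.hasDerivAt_sqrt (by positivity)
  have h3 := h2.comp a h1
  have h4 := (hasDerivAt_gaussQ (Real.sqrt (2 * a * γ))).comp a h3
  refine h4.congr_deriv ?_
  have hs : Real.sqrt (2 * a * γ) ^ 2 = 2 * a * γ := Real.sq_sqrt (by positivity)
  rw [hs, show -(2 * a * γ) / 2 = -(a * γ) by ring]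
  have hne : Real.sqrt (2 * a * γ) ≠ 0 := by positivity
  field_simp

lemma hasDerivAt_F (m γbar : ℝ) (hm : 0 < m) (hγ : 0 < γbar) {α : ℝ} (hα : 0 < α) :
    HasDerivAt
      (fun a => ∫ γ in Set.Ioi (0:ℝ), gaussQ (Real.sqrt (2 * a * γ)) * nakagamiPdf m γbar γ)
      (∫ γ in Set.Ioi (0:ℝ),
        (-((Real.sqrt (2 * Real.pi))⁻¹ * Real.exp (-(α * γ))) * (γ / Real.sqrt (2 * α * γ))) *
          nakagamiPdf m γbar γ) α := by
  set c : ℝ := (Real.sqrt (2 * Real.pi))⁻¹ with hc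
  have hpdf_meas : AEStronglyMeasurable (nakagamiPdf m γbar) (volume.restrict (Set.Ioi 0)) :=
    (continuousOn_pdf m γbar).aestronglyMeasurable measurableSet_Ioi
  have key := hasDerivAt_integral_of_dominated_loc_of_deriv_le (μ := volume.restrict (Set.Ioi 0))
    (x₀ := α)
    (F := fun a γ => gaussQ (Real.sqrt (2 * a * γ)) * nakagamiPdf m γbar γ)
    (F' := fun a γ => (-(c * Real.exp (-(a * γ))) * (γ / Real.sqrt (2 * a * γ))) *
      nakagamiPdf m γbar γ)
    (bound := fun γ => c * (Real.sqrt γ / Real.sqrt α) * nakagamiPdf m γbar γ)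
    (Metric.ball_mem_nhds α (half_pos hα))
    (Filter.Eventually.of_forall fun x =>
      ((continuous_gaussQ.comp (Real.continuous_sqrt.comp (by continuity))).aestronglyMeasurable.mul
        hpdf_meas))
    ?_ ?_ ?_ ?_ ?_
  · exact key.2
  · -- integrability of F α
    apply Integrable.mono' (integrableOn_pdf hm hγ)
    · exact (continuous_gaussQ.comp (Real.continuous_sqrt.comp (by continuity))).aestronglyMeasurable.mul
        hpdf_meas
    · refine (ae_restrict_mem measurableSet_Ioi).mono fun γ hγ' => ?_
      have h0 := pdf_nonneg hm hγ γ (le_of_lt hγ')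
      rw [Real.norm_eq_abs, abs_of_nonneg (mul_nonneg (gaussQ_nonneg _) h0)]
      calc gaussQ (Real.sqrt (2 * α * γ)) * nakagamiPdf m γbar γ
          ≤ 1 * nakagamiPdf m γbar γ := mul_le_mul_of_nonneg_right (gaussQ_le_one _) h0
        _ = nakagamiPdf m γbar γ := one_mul _
  · -- measurability of F' α
    refine AEStronglyMeasurable.mul ?_ hpdf_meas
    apply ContinuousOn.aestronglyMeasurable _ measurableSet_Ioi
    intro γ hγ'
    apply ContinuousAt.continuousWithinAt
    have hne : Real.sqrt (2 * α * γ) ≠ 0 := by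
      have : (0:ℝ) < 2 * α * γ := by have := mem_Ioi.mp hγ'; positivity
      positivity
    exact ((((continuous_const.mul ((continuous_const.mul continuous_id).neg.rexp)).neg).continuousAt).mul
      ((continuous_id.continuousAt).div
        ((Real.continuous_sqrt.comp (by continuity)).continuousAt) hne))
  · -- bound
    refine (ae_restrict_mem measurableSet_Ioi).mono fun γ hγ' x hx => ?_
    have hγp : (0:ℝ) < γ := mem_Ioi.mp hγ'
    have hxp : α / 2 < x := by
      have := abs_lt.mp (mem_ball_iff_norm.mp hx)
      linarith [this.1]
    have hx0 : (0:ℝ) < x := lt_trans (half_pos hα) hxp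
    have h0 := pdf_nonneg hm hγ γ hγp.le
    have hsq : Real.sqrt α * Real.sqrt γ ≤ Real.sqrt (2 * x * γ) := by
      rw [← Real.sqrt_mul hα.le]
      apply Real.sqrt_le_sqrt
      nlinarith
    have hsqpos : 0 < Real.sqrt α * Real.sqrt γ := by positivity
    rw [Real.norm_eq_abs, abs_mul, abs_of_nonneg h0, abs_mul, abs_neg, abs_of_nonneg (by positivity),
      abs_of_nonneg (by positivity)]
    apply mul_le_mul_of_nonneg_right _ h0
    calc c * Real.exp (-(x * γ)) * (γ / Real.sqrt (2 * x * γ))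
        ≤ c * 1 * (γ / (Real.sqrt α * Real.sqrt γ)) := by
          apply mul_le_mul
          · exact mul_le_mul_of_nonneg_left (Real.exp_le_one_iff.mpr (by nlinarith)) (by positivity)
          · exact div_le_div_of_nonneg_left hγp.le hsqpos hsq
          · positivity
          · positivity
      _ = c * (Real.sqrt γ / Real.sqrt α) := by
          rw [mul_one]
          congr 1
          rw [div_mul_eq_div_div_swap, Real.div_sqrt]
  · -- integrability of bound
    have base := ((integrableOn_gpow (s := m + 1/2) (b := m / γbar) (by linarith)
      (by positivity)).const_mul ((m / γbar) ^ m / Real.Gamma m)).const_mul (c / Real.sqrt α)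
    apply MeasureTheory.Integrable.congr base
    refine (ae_restrict_mem measurableSet_Ioi).mono fun γ hγ' => ?_
    have hγp : (0:ℝ) < γ := mem_Ioi.mp hγ'
    simp only
    rw [nakagamiPdf_eq, show m + 1/2 - 1 = 1/2 + (m - 1) by ring]
    simp only [Real.sqrt_eq_rpow]
    rw [
      Real.rpow_add hγp]
    ring
  · -- differentiability
    refine (ae_restrict_mem measurableSet_Ioi).mono fun γ hγ' x hx => ?_
    have hγp : (0:ℝ) < γ := mem_Ioi.mp hγ'
    have hxp : α / 2 < x := by
      have := abs_lt.mp (mem_ball_iff_norm.mp hx)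
      linarith [this.1]
    exact (hasDerivAt_Q_comp hγp (lt_trans (half_pos hα) hxp)).mul_const _

lemma F'_integral (m γbar : ℝ) (hm : 0 < m) (hγ : 0 < γbar) {α : ℝ} (hα : 0 < α) :
    (∫ γ in Set.Ioi (0:ℝ),
      (-((Real.sqrt (2 * Real.pi))⁻¹ * Real.exp (-(α * γ))) * (γ / Real.sqrt (2 * α * γ))) *
        nakagamiPdf m γbar γ)
    = -((Real.sqrt (2 * Real.pi))⁻¹ / Real.sqrt (2 * α) * ((m / γbar) ^ m / Real.Gamma m) *
        ((1 / (α + m / γbar)) ^ (m + 1/2) * Real.Gamma (m + 1/2))) := by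
  set c : ℝ := (Real.sqrt (2 * Real.pi))⁻¹ with hc
  have hcpos : 0 < c := by rw [hc]; positivity
  have hcong : Set.EqOn
      (fun γ => (-(c * Real.exp (-(α * γ))) * (γ / Real.sqrt (2 * α * γ))) * nakagamiPdf m γbar γ)
      (fun γ => (-(c / Real.sqrt (2 * α) * ((m / γbar) ^ m / Real.Gamma m))) *
        (γ ^ (m + 1/2 - 1) * Real.exp (-((α + m / γbar) * γ)))) (Set.Ioi 0) := by
    intro γ hγ'
    have hγp : (0:ℝ) < γ := mem_Ioi.mp hγ'
    simp only
    rw [nakagamiPdf_eq, Real.sqrt_mul (by positivity : (0:ℝ) ≤ 2 * α) γ,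
      div_mul_eq_div_div_swap, Real.div_sqrt,
      show m + 1/2 - 1 = 1/2 + (m - 1) by ring, Real.rpow_add hγp,
      show -((α + m / γbar) * γ) = -(α * γ) + -(m / γbar * γ) by ring, Real.exp_add,
      show γ ^ ((1:ℝ)/2) = Real.sqrt γ from (Real.sqrt_eq_rpow γ).symm]
    have h1 : Real.sqrt (2 * α) ≠ 0 := by positivity
    have h2 : Real.Gamma m ≠ 0 := (Real.Gamma_pos_of_pos hm).ne'
    field_simp
  rw [setIntegral_congr_fun measurableSet_Ioi hcong, MeasureTheory.integral_const_mul,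
    integral_rpow_mul_exp_neg_mul_Ioi (by linarith : (0:ℝ) < m + 1/2) (by positivity)]
  ring

lemma continuousOn_betaKernel {m : ℝ} :
    ContinuousOn (fun t : ℝ => t ^ (m - 1) * (1 - t) ^ ((1:ℝ)/2 - 1)) (Set.Ioo 0 1) := by
  intro t ht
  apply ContinuousAt.continuousWithinAt
  have h1 : ContinuousAt (fun t : ℝ => t ^ (m - 1)) t :=
    Real.continuousAt_rpow_const t _ (Or.inl (ne_of_gt ht.1))
  have h2 : ContinuousAt (fun t : ℝ => (1 - t) ^ ((1:ℝ)/2 - 1)) t := by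
    apply ContinuousAt.rpow_const
    · exact (continuous_const.sub continuous_id).continuousAt
    · exact Or.inl (sub_ne_zero.mpr ht.2.ne')
  exact h1.mul h2

lemma intervalIntegrable_betaKernel {m : ℝ} (hm : 0 < m) {y : ℝ} (h0 : 0 ≤ y) (h1 : y < 1) :
    IntervalIntegrable (fun t : ℝ => t ^ (m - 1) * (1 - t) ^ ((1:ℝ)/2 - 1)) volume 0 y := by
  rw [intervalIntegrable_iff_integrableOn_Ioc_of_le h0]
  have base : IntegrableOn (fun t : ℝ => (1 - y) ^ ((1:ℝ)/2 - 1) * t ^ (m - 1)) (Set.Ioc 0 y) :=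
    (((intervalIntegral.intervalIntegrable_rpow' (a := 0) (b := y) (by linarith : (-1:ℝ) < m - 1)).1).const_mul
      _)
  apply base.mono'
  · apply ContinuousOn.aestronglyMeasurable _ measurableSet_Ioc
    exact continuousOn_betaKernel.mono (fun t ht => ⟨ht.1, lt_of_le_of_lt ht.2 h1⟩)
  · refine (ae_restrict_mem measurableSet_Ioc).mono fun t ht => ?_
    have ht1 : 0 < t := ht.1
    have ht2 : t ≤ y := ht.2
    have hb : 0 < 1 - y := by linarith
    rw [Real.norm_eq_abs, abs_mul, abs_of_nonneg (Real.rpow_nonneg ht1.le _),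
      abs_of_nonneg (Real.rpow_nonneg (by linarith : (0:ℝ) ≤ 1 - t) _), mul_comm]
    apply mul_le_mul_of_nonneg_right _ (Real.rpow_nonneg ht1.le _)
    exact Real.rpow_le_rpow_of_nonpos hb (by linarith) (by norm_num)

lemma hasDerivAt_G (m γbar : ℝ) (hm : 0 < m) (hγ : 0 < γbar) {α : ℝ} (hα : 0 < α) :
    HasDerivAt (fun a => incBeta (m / (m + a * γbar)) m (1/2))
      (((m / (m + α * γbar)) ^ (m - 1) * (1 - m / (m + α * γbar)) ^ ((1:ℝ)/2 - 1)) *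
        (-(m * γbar) / (m + α * γbar) ^ 2)) α := by
  have hs : 0 < m + α * γbar := by positivity
  have hx0 : 0 < m / (m + α * γbar) := by positivity
  have hx1 : m / (m + α * γbar) < 1 := by
    rw [div_lt_one hs]; nlinarith
  have hxd : HasDerivAt (fun a : ℝ => m / (m + a * γbar))
      (-(m * γbar) / (m + α * γbar) ^ 2) α := by
    have hd : HasDerivAt (fun a : ℝ => m + a * γbar) γbar α := by
      simpa using ((hasDerivAt_id α).mul_const γbar).const_add m
    have h2 := (hasDerivAt_const α m).div hd hs.ne'
    refine h2.congr_deriv ?_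
    ring
  have ftc : HasDerivAt (fun y => ∫ t in (0:ℝ)..y, t ^ (m - 1) * (1 - t) ^ ((1:ℝ)/2 - 1))
      ((m / (m + α * γbar)) ^ (m - 1) * (1 - m / (m + α * γbar)) ^ ((1:ℝ)/2 - 1))
      (m / (m + α * γbar)) := by
    apply intervalIntegral.integral_hasDerivAt_right
      (intervalIntegrable_betaKernel hm hx0.le hx1)
    · exact ⟨Set.Ioo 0 1, Ioo_mem_nhds hx0 hx1,
        continuousOn_betaKernel.aestronglyMeasurable measurableSet_Ioo⟩
    · exact (continuousOn_betaKernel _ ⟨hx0, hx1⟩).continuousAt (Ioo_mem_nhds hx0 hx1)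
  exact ftc.comp α hxd

lemma incBeta_one_eq {m : ℝ} (hm : 0 < m) :
    incBeta 1 m (1/2) = Real.sqrt Real.pi * Real.Gamma m / Real.Gamma (m + 1/2) := by
  have hbeta : Complex.betaIntegral (m : ℂ) ((1:ℂ)/2) = (incBeta 1 m (1/2) : ℂ) := by
    unfold Complex.betaIntegral incBeta
    rw [← intervalIntegral.integral_ofReal]
    apply intervalIntegral.integral_congr
    intro x hx
    rw [Set.uIcc_of_le (by norm_num : (0:ℝ) ≤ 1)] at hx
    push_cast
    rw [Complex.ofReal_cpow hx.1, Complex.ofReal_cpow (by linarith [hx.2] : (0:ℝ) ≤ 1 - x)]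
    push_cast
    ring
  have hGG := Complex.Gamma_mul_Gamma_eq_betaIntegral
    (by simpa using hm : 0 < (m:ℂ).re) (by norm_num : 0 < ((1:ℂ)/2).re)
  rw [hbeta] at hGG
  rw [show ((1:ℂ)/2) = ((1/2 : ℝ) : ℂ) by norm_num,
    show ((m:ℂ) + ((1/2:ℝ):ℂ)) = ((m + 1/2 : ℝ) : ℂ) by push_cast; ring,
    Complex.Gamma_ofReal, Complex.Gamma_ofReal, Complex.Gamma_ofReal] at hGG
  have h : Real.Gamma m * Real.Gamma (1/2) = Real.Gamma (m + 1/2) * incBeta 1 m (1/2) := by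
    exact_mod_cast hGG
  rw [Real.Gamma_one_half_eq] at h
  have hΓ : 0 < Real.Gamma (m + 1/2) := Real.Gamma_pos_of_pos (by linarith)
  rw [eq_div_iff hΓ.ne']
  linarith [h]

lemma deriv_match (m γbar α : ℝ) (hm : 0 < m) (hγ : 0 < γbar) (hα : 0 < α) :
    -((Real.sqrt (2 * Real.pi))⁻¹ / Real.sqrt (2 * α) * ((m / γbar) ^ m / Real.Gamma m) *
        ((1 / (α + m / γbar)) ^ (m + 1/2) * Real.Gamma (m + 1/2)))
    = (1/2) * ((((m / (m + α * γbar)) ^ (m - 1) *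
          (1 - m / (m + α * γbar)) ^ ((1:ℝ)/2 - 1)) * (-(m * γbar) / (m + α * γbar) ^ 2)) /
        (Real.sqrt Real.pi * Real.Gamma m / Real.Gamma (m + 1/2))) := by
  have hs : 0 < m + α * γbar := by positivity
  have h1 : 1 / (α + m / γbar) = γbar / (m + α * γbar) := by
    rw [show α + m / γbar = (m + α * γbar) / γbar by field_simp; ring, one_div_div]
  have h2 : (1:ℝ) - m / (m + α * γbar) = α * γbar / (m + α * γbar) := by
    rw [eq_div_iff hs.ne', sub_mul, one_mul, div_mul_cancel₀ _ hs.ne']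
    ring
  rw [h1, h2]
  have hsqrt : (Real.sqrt (2 * Real.pi))⁻¹ / Real.sqrt (2 * α) =
      (2 * Real.sqrt Real.pi * α ^ ((1:ℝ)/2))⁻¹ := by
    rw [div_eq_mul_inv, ← mul_inv]
    congr 1
    rw [← Real.sqrt_mul (by positivity), show 2 * Real.pi * (2 * α) = 4 * (Real.pi * α) by ring,
      Real.sqrt_mul (by norm_num : (0:ℝ) ≤ 4), show (4:ℝ) = 2 ^ 2 by norm_num,
      Real.sqrt_sq (by norm_num : (0:ℝ) ≤ 2), Real.sqrt_mul Real.pi_pos.le,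
      Real.sqrt_eq_rpow α]
    ring
  rw [hsqrt]
  rw [Real.div_rpow hm.le hγ.le, Real.div_rpow hγ.le hs.le, Real.div_rpow hm.le hs.le,
    Real.div_rpow (by positivity : (0:ℝ) ≤ α * γbar) hs.le,
    Real.mul_rpow hα.le hγ.le,
    Real.rpow_add hγ m (1/2), Real.rpow_add hs m (1/2),
    Real.rpow_sub hm m 1, Real.rpow_sub hs m 1, Real.rpow_one, Real.rpow_one,
    show ((1:ℝ)/2 - 1) = -((1:ℝ)/2) by norm_num,
    Real.rpow_neg hα.le, Real.rpow_neg hγ.le, Real.rpow_neg hs.le]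
  have hss : m + α * γbar = (m + α * γbar) ^ ((1:ℝ)/2) * (m + α * γbar) ^ ((1:ℝ)/2) := by
    rw [← Real.rpow_add hs]; norm_num
  have hgg : γbar = γbar ^ ((1:ℝ)/2) * γbar ^ ((1:ℝ)/2) := by
    rw [← Real.rpow_add hγ]; norm_num
  have hΓm : Real.Gamma m ≠ 0 := (Real.Gamma_pos_of_pos hm).ne'
  have hΓm2 : Real.Gamma (m + 1/2) ≠ 0 := (Real.Gamma_pos_of_pos (by linarith)).ne'
  have e1 : (0:ℝ) < (m + α * γbar) ^ ((1:ℝ)/2) := Real.rpow_pos_of_pos hs _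
  have e2 : (0:ℝ) < (m + α * γbar) ^ m := Real.rpow_pos_of_pos hs _
  have e3 : (0:ℝ) < γbar ^ ((1:ℝ)/2) := Real.rpow_pos_of_pos hγ _
  have e4 : (0:ℝ) < γbar ^ m := Real.rpow_pos_of_pos hγ _
  have e5 : (0:ℝ) < α ^ ((1:ℝ)/2) := Real.rpow_pos_of_pos hα _
  have e6 : (0:ℝ) < Real.sqrt Real.pi := Real.sqrt_pos.mpr Real.pi_pos
  generalize hA : α ^ ((1:ℝ)/2) = A at e5 ⊢
  generalize hS2 : (m + α * γbar) ^ ((1:ℝ)/2) = S2 at e1 hss ⊢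
  generalize hSm : (m + α * γbar) ^ (m:ℝ) = Sm at e2 ⊢
  generalize hG2 : γbar ^ ((1:ℝ)/2) = G2 at e3 hgg ⊢
  generalize hGm : γbar ^ (m:ℝ) = Gm at e4 ⊢
  generalize hMm : m ^ (m:ℝ) = Mm
  rw [hss, hgg]
  field_simp
lemma F_tendsto (m γbar : ℝ) (hm : 0 < m) (hγ : 0 < γbar) :
    Filter.Tendsto (fun a => ∫ γ in Set.Ioi (0:ℝ),
        gaussQ (Real.sqrt (2 * a * γ)) * nakagamiPdf m γbar γ)
      Filter.atTop (nhds 0) := by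
  have H := tendsto_integral_filter_of_dominated_convergence
    (μ := volume.restrict (Set.Ioi 0)) (l := Filter.atTop)
    (F := fun (a : ℝ) (γ : ℝ) => gaussQ (Real.sqrt (2 * a * γ)) * nakagamiPdf m γbar γ)
    (f := fun _ => (0:ℝ)) (nakagamiPdf m γbar) ?_ ?_ ?_ ?_
  · simpa using H
  · apply Filter.Eventually.of_forall
    intro a
    exact (continuous_gaussQ.comp (Real.continuous_sqrt.comp (by continuity))).aestronglyMeasurable.mul
      ((continuousOn_pdf m γbar).aestronglyMeasurable measurableSet_Ioi)
  · apply Filter.Eventually.of_forall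
    intro a
    refine (ae_restrict_mem measurableSet_Ioi).mono fun γ hγ' => ?_
    have h0p := pdf_nonneg hm hγ γ (le_of_lt hγ')
    rw [Real.norm_eq_abs, abs_of_nonneg (mul_nonneg (gaussQ_nonneg _) h0p)]
    calc gaussQ (Real.sqrt (2 * a * γ)) * nakagamiPdf m γbar γ
        ≤ 1 * nakagamiPdf m γbar γ := mul_le_mul_of_nonneg_right (gaussQ_le_one _) h0p
      _ = nakagamiPdf m γbar γ := one_mul _
  · exact integrableOn_pdf hm hγ
  · refine (ae_restrict_mem measurableSet_Ioi).mono fun γ hγ' => ?_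
    have hγp : (0:ℝ) < γ := mem_Ioi.mp hγ'
    have h1 : Filter.Tendsto (fun a : ℝ => 2 * a * γ) Filter.atTop Filter.atTop := by
      have : (fun a : ℝ => 2 * a * γ) = fun a : ℝ => (2 * γ) * a := by funext a; ring
      rw [this]
      exact Filter.Tendsto.const_mul_atTop (by positivity) Filter.tendsto_id
    have hsq : Filter.Tendsto Real.sqrt Filter.atTop Filter.atTop := by
      refine (tendsto_rpow_atTop (by norm_num : (0:ℝ) < 1/2)).congr' ?_
      filter_upwards [Filter.eventually_ge_atTop (0:ℝ)] with x hx
      rw [Real.sqrt_eq_rpow]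
    have h2 : Filter.Tendsto (fun a : ℝ => Real.sqrt (2 * a * γ)) Filter.atTop Filter.atTop :=
      hsq.comp h1
    have h3 := gaussQ_tendsto.comp h2
    have := h3.mul_const (nakagamiPdf m γbar γ)
    simpa using this

lemma incBeta_le {m : ℝ} (hm : 0 < m) {y : ℝ} (h0 : 0 < y) (h1 : y ≤ 1/2) :
    incBeta y m (1/2) ≤ Real.sqrt 2 / m * y ^ m := by
  have hint1 := intervalIntegrable_betaKernel hm h0.le (by linarith : y < 1)
  have hint2 : IntervalIntegrable (fun t : ℝ => Real.sqrt 2 * t ^ (m - 1)) volume 0 y :=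
    (intervalIntegral.intervalIntegrable_rpow' (by linarith : (-1:ℝ) < m - 1)).const_mul _
  have hle : ∀ t ∈ Set.Icc (0:ℝ) y,
      t ^ (m - 1) * (1 - t) ^ ((1:ℝ)/2 - 1) ≤ Real.sqrt 2 * t ^ (m - 1) := by
    intro t ht
    rw [mul_comm (Real.sqrt 2)]
    apply mul_le_mul_of_nonneg_left _ (Real.rpow_nonneg ht.1 _)
    calc (1 - t) ^ ((1:ℝ)/2 - 1) ≤ ((1:ℝ)/2) ^ ((1:ℝ)/2 - 1) :=
        Real.rpow_le_rpow_of_nonpos (by norm_num) (by nlinarith [ht.2]) (by norm_num)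
      _ = ((1:ℝ)/2) ^ ((1:ℝ)/2) / ((1:ℝ)/2) := by
        rw [Real.rpow_sub (by norm_num), Real.rpow_one]
      _ = Real.sqrt 2 := by
        have h22 : Real.sqrt 2 * Real.sqrt 2 = 2 := Real.mul_self_sqrt (by norm_num)
        rw [one_div, Real.inv_rpow (by norm_num : (0:ℝ) ≤ 2),
          show ((2:ℝ) ^ ((2:ℝ)⁻¹ : ℝ)) = Real.sqrt 2 by rw [Real.sqrt_eq_rpow]; norm_num]
        field_simp
        rw [sq, h22]
  calc incBeta y m (1/2) ≤ ∫ t in (0:ℝ)..y, Real.sqrt 2 * t ^ (m - 1) :=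
      intervalIntegral.integral_mono_on h0.le hint1 hint2 hle
    _ = Real.sqrt 2 / m * y ^ m := by
      rw [intervalIntegral.integral_const_mul, integral_rpow (Or.inl (by linarith : (-1:ℝ) < m - 1)),
        show m - 1 + 1 = m by ring, Real.zero_rpow hm.ne', sub_zero]
      ring

lemma incBeta_x_tendsto (m γbar : ℝ) (hm : 0 < m) (hγ : 0 < γbar) :
    Filter.Tendsto (fun a => incBeta (m / (m + a * γbar)) m (1/2)) Filter.atTop (nhds 0) := by
  have hx : Filter.Tendsto (fun a : ℝ => m / (m + a * γbar)) Filter.atTop (nhds 0) := by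
    apply Filter.Tendsto.div_atTop (tendsto_const_nhds (x := m))
    apply Filter.tendsto_atTop_add_const_left
    exact Filter.Tendsto.atTop_mul_const hγ Filter.tendsto_id
  have hxm : Filter.Tendsto (fun a : ℝ => (m / (m + a * γbar)) ^ m) Filter.atTop (nhds 0) := by
    have hc := (Real.continuousAt_rpow_const 0 m (Or.inr hm.le)).tendsto.comp hx
    rwa [Real.zero_rpow hm.ne'] at hc
  have hev1 : ∀ᶠ a : ℝ in Filter.atTop, 0 < m / (m + a * γbar) := by
    filter_upwards [Filter.eventually_gt_atTop 0] with a ha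
    positivity
  have hev2 : ∀ᶠ a : ℝ in Filter.atTop, m / (m + a * γbar) ≤ 1/2 :=
    (hx.eventually_lt_const (by norm_num : (0:ℝ) < 1/2)).mono (fun _ h => h.le)
  apply squeeze_zero' (g := fun a => Real.sqrt 2 / m * (m / (m + a * γbar)) ^ m)
  · filter_upwards [hev1, hev2] with a ha hb
    apply intervalIntegral.integral_nonneg ha.le
    intro t ht
    have h1t : (0:ℝ) ≤ 1 - t := by
      have h2' := ht.2
      nlinarith [ht.1]
    exact mul_nonneg (Real.rpow_nonneg ht.1 _) (Real.rpow_nonneg h1t _)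
  · filter_upwards [hev1, hev2] with a ha hb
    exact incBeta_le hm ha hb
  · have := (hxm.const_mul (Real.sqrt 2 / m))
    simpa using this

theorem lemma2_avg_Q_nakagami (m γbar α : ℝ) (hm : 0 < m) (hγ : 0 < γbar) (hα : 0 < α) :
    ∫ γ in Set.Ioi (0:ℝ), gaussQ (Real.sqrt (2 * α * γ)) * nakagamiPdf m γbar γ =
      (1 / 2) * regIncBeta (m / (m + α * γbar)) m (1 / 2) := by
  have hBval := incBeta_one_eq hm
  have hΓ1 := Real.Gamma_pos_of_pos hm
  have hΓ2 := Real.Gamma_pos_of_pos (show (0:ℝ) < m + 1/2 by linarith)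
  have hBpos : 0 < incBeta 1 m (1/2) := by
    rw [hBval]
    have hπ := Real.pi_pos
    positivity
  set Fn := fun a : ℝ => ∫ γ in Set.Ioi (0:ℝ),
    gaussQ (Real.sqrt (2 * a * γ)) * nakagamiPdf m γbar γ with hFn
  set Gn := fun a : ℝ =>
    (1/2 : ℝ) * (incBeta (m / (m + a * γbar)) m (1/2) / incBeta 1 m (1/2)) with hGn
  have hH : ∀ a : ℝ, 0 < a → HasDerivAt (fun t => Fn t - Gn t) 0 a := by
    intro a ha
    have hF := hasDerivAt_F m γbar hm hγ ha
    rw [F'_integral m γbar hm hγ ha] at hF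
    have hG := ((hasDerivAt_G m γbar hm hγ ha).div_const (incBeta 1 m (1/2))).const_mul (1/2 : ℝ)
    have heq := deriv_match m γbar a hm hγ ha
    have hsub := hF.sub hG
    refine hsub.congr_deriv ?_
    rw [heq, hBval]
    ring
  have hconst : ∀ a b : ℝ, 0 < a → a ≤ b → Fn a - Gn a = Fn b - Gn b := by
    intro a b ha hab
    have hint : IntervalIntegrable (fun _ : ℝ => (0:ℝ)) volume a b := intervalIntegrable_const
    have h2 := intervalIntegral.integral_eq_sub_of_hasDerivAt
      (f := fun t => Fn t - Gn t) (f' := fun _ => (0:ℝ))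
      (fun t ht => by
        rw [Set.uIcc_of_le hab] at ht
        exact hH t (lt_of_lt_of_le ha ht.1)) hint
    have h3 : (0:ℝ) = (Fn b - Gn b) - (Fn a - Gn a) := by simpa using h2
    linarith
  have hFlim := F_tendsto m γbar hm hγ
  have hGlim : Filter.Tendsto Gn Filter.atTop (nhds 0) := by
    have h4 := (((incBeta_x_tendsto m γbar hm hγ).div_const
      (incBeta 1 m (1/2))).const_mul (1/2 : ℝ))
    rw [hGn]
    simpa only [zero_div, mul_zero] using h4
  have hHlim : Filter.Tendsto (fun b => Fn b - Gn b) Filter.atTop (nhds 0) := by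
    simpa using hFlim.sub hGlim
  have hev : (fun b => Fn b - Gn b) =ᶠ[Filter.atTop] fun _ => Fn α - Gn α := by
    filter_upwards [Filter.eventually_ge_atTop α] with b hb
    exact (hconst α b hα hb).symm
  have h5 := tendsto_nhds_unique (hHlim.congr' hev) tendsto_const_nhds
  have final : Fn α = Gn α := by linarith
  calc (∫ γ in Set.Ioi (0:ℝ), gaussQ (Real.sqrt (2 * α * γ)) * nakagamiPdf m γbar γ)
      = Fn α := rfl
    _ = Gn α := final
    _ = (1 / 2) * regIncBeta (m / (m + α * γbar)) m (1 / 2) := rfl
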